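/- For a quasi-norm |·| on an Abelian group with triangle constant κ ≥ 1 (i.e., |a+b| ≤ κ(|a|+|b|)), if ρ > 0 satisfies (2κ)^ρ = 2, then there exists an equivalent 1-norm |·|' on the group satisfying |a|' ≤ |a|^ρ ≤ 2|a|' for all a. -/

import Mathlib

open List

namespace QuasinormAux

/-- dyadic weight `2⁻ᵈ` -/
noncomputable def qw (d : ℕ) : ℝ := ((2:ℝ)^d)⁻¹

lemma qw_pos (d : ℕ) : 0 < qw d := by unfold qw; positivity

lemma qw_le_one (d : ℕ) : qw d ≤ 1 := by
  unfold qw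
  rw [inv_le_one_iff₀]
  right
  exact one_le_pow₀ (by norm_num)

lemma qw_zero : qw 0 = 1 := by simp [qw]

lemma qw_anti {d e : ℕ} (h : d ≤ e) : qw e ≤ qw d := by
  unfold qw
  apply inv_anti₀ (by positivity)
  exact pow_le_pow_right₀ (by norm_num) h

lemma qw_pred {d : ℕ} (h : 1 ≤ d) : qw (d - 1) = 2 * qw d := by
  obtain ⟨e, rfl⟩ := Nat.exists_eq_add_of_le h
  simp only [Nat.add_sub_cancel_left, qw]
  rw [pow_add, pow_one, mul_inv]
  ring

lemma exists_max_snd {A : Type*} (l : List (A × ℕ)) (h : l ≠ []) :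
    ∃ p ∈ l, ∀ q ∈ l, q.2 ≤ p.2 := by
  induction l with
  | nil => exact absurd rfl h
  | cons a t ih =>
    rcases eq_or_ne t [] with rfl | ht
    · exact ⟨a, by simp, by simp⟩
    · obtain ⟨p, hp, hmax⟩ := ih ht
      rcases le_total p.2 a.2 with hc | hc
      · refine ⟨a, by simp, ?_⟩
        intro q hq
        rcases mem_cons.1 hq with rfl | hq
        · exact le_refl _
        · exact le_trans (hmax q hq) hc
      · refine ⟨p, mem_cons_of_mem _ hp, ?_⟩
        intro q hq
        rcases mem_cons.1 hq with rfl | hq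
        · exact hc
        · exact hmax q hq

lemma sum_map_neg {A : Type*} [AddCommGroup A] (l : List A) :
    (l.map fun x => -x).sum = -l.sum := by
  induction l with
  | nil => simp
  | cons x t ih => simp [ih]; abel

variable {A : Type*} [AddCommGroup A]

/-- The Kraft-type key lemma, proved by a Huffman merging induction. -/
lemma key_lemma (H : A → ℝ) (h0 : H 0 = 0)
    (h2 : ∀ a b, H (a + b) ≤ 2 * max (H a) (H b))
    (T : ℝ) (hT : 0 ≤ T) :
    ∀ n (l : List (A × ℕ)), l.length ≤ n →
      (∀ p ∈ l, H p.1 ≤ qw p.2 * T) →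
      ((l.map fun p => qw p.2).sum ≤ 1) →
      H (l.map Prod.fst).sum ≤ T := by
  intro n
  induction n with
  | zero =>
    intro l hl _ _
    have : l = [] := List.eq_nil_of_length_eq_zero (Nat.le_zero.1 hl)
    subst this
    simpa [h0] using hT
  | succ n ih =>
    intro l hlen hbound hwsum
    classical
    by_cases hnil : l = []
    · subst hnil; simpa [h0] using hT
    obtain ⟨a, ha, hamax⟩ := exists_max_snd l hnil
    obtain ⟨l₁, hperm1⟩ : ∃ t, l.Perm (a :: t) := ⟨_, List.perm_cons_erase ha⟩
    by_cases hnil1 : l₁ = []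
    · -- singleton case
      have hsum1 : (l.map Prod.fst).sum = a.1 := by
        rw [(hperm1.map Prod.fst).sum_eq]
        simp [hnil1]
      rw [hsum1]
      calc H a.1 ≤ qw a.2 * T := hbound a ha
        _ ≤ 1 * T := mul_le_mul_of_nonneg_right (qw_le_one _) hT
        _ = T := one_mul T
    obtain ⟨b, hb1, hbmax⟩ := exists_max_snd l₁ hnil1
    have hbl : b ∈ l := (hperm1.mem_iff).2 (mem_cons_of_mem _ hb1)
    obtain ⟨rest, hperm2⟩ : ∃ t, l₁.Perm (b :: t) := ⟨_, List.perm_cons_erase hb1⟩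
    have hrest_mem : ∀ p ∈ rest, p ∈ l₁ := fun p hp => (hperm2.mem_iff).2 (mem_cons_of_mem _ hp)
    -- the weight sum, rewritten
    have hwsum' : qw a.2 + (qw b.2 + (rest.map fun p => qw p.2).sum) ≤ 1 := by
      have e1 : (l.map fun p => qw p.2).sum
          = qw a.2 + (qw b.2 + (rest.map fun p => qw p.2).sum) := by
        rw [(hperm1.map fun p => qw p.2).sum_eq]
        simp only [map_cons, sum_cons]
        rw [(hperm2.map fun p => qw p.2).sum_eq]
        simp only [map_cons, sum_cons]
      rw [← e1]; exact hwsum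
    have hrest_nonneg : 0 ≤ (rest.map fun p => qw p.2).sum :=
      List.sum_nonneg (by
        intro x hx
        obtain ⟨p, _, rfl⟩ := List.mem_map.1 hx
        exact (qw_pos _).le)
    -- b.2 ≥ 1
    have hb2 : 1 ≤ b.2 := by
      by_contra hcon
      have hb0 : b.2 = 0 := by omega
      rw [hb0, qw_zero] at hwsum'
      have := qw_pos a.2
      linarith
    have hab : b.2 ≤ a.2 := hamax b hbl
    -- integrality: rescaled weights
    have hWpos : 0 < qw b.2 := qw_pos b.2
    have hrest_eq : (rest.map fun p => qw p.2).sum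
        = ((rest.map fun p => (2:ℕ)^(b.2 - p.2)).sum : ℕ) * qw b.2 := by
      rw [Nat.cast_list_sum, List.map_map]
      have heq : (rest.map fun p => qw p.2)
          = rest.map fun p => ((2:ℕ)^(b.2 - p.2) : ℝ) * qw b.2 := by
        apply List.map_congr_left
        intro p hp
        have hpb : p.2 ≤ b.2 := hbmax p (hrest_mem p hp)
        have h2b : (2:ℝ)^b.2 = (2:ℝ)^(b.2 - p.2) * (2:ℝ)^p.2 := by
          rw [← pow_add, Nat.sub_add_cancel hpb]
        push_cast
        unfold qw
        rw [h2b, mul_inv]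
        have hne1 : ((2:ℝ)^p.2) ≠ 0 := by positivity
        have hne2 : ((2:ℝ)^(b.2 - p.2)) ≠ 0 := by positivity
        field_simp
      rw [heq, List.sum_map_mul_right]
      congr 1
      refine congrArg List.sum (List.map_congr_left ?_)
      intro p hp
      simp only [Function.comp_apply]
      push_cast
      ring
    set K : ℕ := (rest.map fun p => (2:ℕ)^(b.2 - p.2)).sum with hK
    -- (K + 2) * qw b.2 ≤ 1
    have hK2 : ((K:ℝ) + 2) * qw b.2 ≤ 1 := by
      have hqa : 0 < qw a.2 := qw_pos a.2
      have h1 : ((K:ℝ) + 1) * qw b.2 < 1 := by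
        rw [hrest_eq] at hwsum'
        nlinarith
      have hpow : (1:ℝ) = ((2:ℕ)^b.2 : ℕ) * qw b.2 := by
        unfold qw; push_cast
        field_simp
      have hKlt : (K:ℝ) + 1 < (((2:ℕ)^b.2 : ℕ) : ℝ) := by
        by_contra hcon
        push_neg at hcon
        have := mul_le_mul_of_nonneg_right hcon hWpos.le
        rw [← hpow] at this
        linarith
      have hKn : K + 1 < 2^b.2 := by exact_mod_cast hKlt
      have hKn2 : (K:ℝ) + 2 ≤ (((2:ℕ)^b.2 : ℕ) : ℝ) := by
        have : K + 2 ≤ 2^b.2 := by omega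
        exact_mod_cast this
      rw [hpow]
      exact mul_le_mul_of_nonneg_right hKn2 hWpos.le
    -- the merged list
    set q : A × ℕ := (a.1 + b.1, b.2 - 1) with hq
    have hlen' : (q :: rest).length ≤ n := by
      have e1 : l.length = l₁.length + 1 := by
        rw [hperm1.length_eq]; rfl
      have e2 : l₁.length = rest.length + 1 := by
        rw [hperm2.length_eq]; rfl
      simp only [List.length_cons]
      omega
    have hbound' : ∀ p ∈ q :: rest, H p.1 ≤ qw p.2 * T := by
      intro p hp
      rcases mem_cons.1 hp with rfl | hp
      · -- merged element
        have hHa : H a.1 ≤ qw b.2 * T :=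
          le_trans (hbound a ha) (mul_le_mul_of_nonneg_right (qw_anti hab) hT)
        have hHb : H b.1 ≤ qw b.2 * T := hbound b hbl
        have hmax : max (H a.1) (H b.1) ≤ qw b.2 * T := max_le hHa hHb
        calc H (a.1 + b.1) ≤ 2 * max (H a.1) (H b.1) := h2 a.1 b.1
          _ ≤ 2 * (qw b.2 * T) := by linarith
          _ = qw (b.2 - 1) * T := by rw [qw_pred hb2]; ring
      · exact hbound p ((hperm1.mem_iff).2 (mem_cons_of_mem _ (hrest_mem p hp)))
    have hwsum'' : ((q :: rest).map fun p => qw p.2).sum ≤ 1 := by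
      simp only [map_cons, sum_cons]
      have hqw : qw q.2 = 2 * qw b.2 := qw_pred hb2
      rw [hqw, hrest_eq]
      calc 2 * qw b.2 + (K:ℝ) * qw b.2 = ((K:ℝ) + 2) * qw b.2 := by ring
        _ ≤ 1 := hK2
    have hsum_eq : ((q :: rest).map Prod.fst).sum = (l.map Prod.fst).sum := by
      rw [(hperm1.map Prod.fst).sum_eq]
      simp only [map_cons, sum_cons]
      rw [(hperm2.map Prod.fst).sum_eq]
      simp only [map_cons, sum_cons]
      exact (add_assoc _ _ _)
    rw [← hsum_eq]
    exact ih (q :: rest) hlen' hbound' hwsum''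

/-- The sharp summation lemma: `H (Σ xᵢ) ≤ 2 Σ H xᵢ`. -/
lemma H_sum_le (H : A → ℝ) (hnn : ∀ a, 0 ≤ H a) (h0 : H 0 = 0)
    (hpos : ∀ a : A, a ≠ 0 → 0 < H a)
    (h2 : ∀ a b, H (a + b) ≤ 2 * max (H a) (H b))
    (l : List A) : H l.sum ≤ 2 * (l.map H).sum := by
  classical
  have hsum_eq' : ∀ t : List A, (t.filter (fun x => !decide (x = 0))).sum = t.sum := by
    intro t
    induction t with
    | nil => rfl
    | cons x t ih =>
      by_cases hx : x = 0
      · subst hx; simpa [List.filter_cons] using ih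
      · simp [List.filter_cons, hx, ih]
  have hmap_eq' : ∀ t : List A,
      ((t.filter (fun x => !decide (x = 0))).map H).sum = (t.map H).sum := by
    intro t
    induction t with
    | nil => rfl
    | cons x t ih =>
      by_cases hx : x = 0
      · subst hx; simpa [List.filter_cons, h0] using ih
      · simp [List.filter_cons, hx, ih]
  set l' := l.filter (fun x => !decide (x = 0)) with hl'
  have hsum_eq : l'.sum = l.sum := hsum_eq' l
  have hmap_eq : (l'.map H).sum = (l.map H).sum := hmap_eq' l
  have hmem : ∀ x ∈ l', x ≠ 0 := by
    intro x hx
    have := (List.mem_filter.1 hx).2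
    simpa using this
  rw [← hsum_eq, ← hmap_eq]
  by_cases hnil : l' = []
  · rw [hnil]; simp [h0]
  set S := (l'.map H).sum with hS
  have hSnn : 0 ≤ S := List.sum_nonneg (by
    intro x hx; obtain ⟨y, _, rfl⟩ := List.mem_map.1 hx; exact hnn y)
  have hHleS : ∀ x ∈ l', H x ≤ S := by
    intro x hx
    apply List.single_le_sum (l := l'.map H)
    · intro y hy; obtain ⟨z, _, rfl⟩ := List.mem_map.1 hy; exact hnn z
    · exact List.mem_map_of_mem (f := H) hx
  have hSpos : 0 < S := by
    obtain ⟨x, hx⟩ := List.exists_mem_of_ne_nil l' hnil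
    exact lt_of_lt_of_le (hpos x (hmem x hx)) (hHleS x hx)
  -- choice of exponents
  set d : A → ℕ := fun x => ⌈Real.logb 2 (S / H x)⌉₊ with hd
  have hdprop : ∀ x ∈ l', qw (d x) ≤ H x / S ∧ H x ≤ qw (d x) * (2 * S) := by
    intro x hx
    have hHx : 0 < H x := hpos x (hmem x hx)
    have hr1 : 1 ≤ S / H x := (one_le_div hHx).2 (hHleS x hx)
    have hrpos : 0 < S / H x := lt_of_lt_of_le one_pos hr1
    have hlnn : 0 ≤ Real.logb 2 (S / H x) := Real.logb_nonneg (by norm_num) hr1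
    have hpow_eq : ((2:ℝ)^(d x) : ℝ) = (2:ℝ) ^ ((d x : ℕ) : ℝ) := by
      rw [Real.rpow_natCast]
    constructor
    · -- qw (d x) ≤ H x / S
      have h1 : (S / H x) ≤ (2:ℝ) ^ (((d x : ℕ)) : ℝ) := by
        calc S / H x = (2:ℝ) ^ (Real.logb 2 (S / H x)) :=
              (Real.rpow_logb (by norm_num) (by norm_num) hrpos).symm
          _ ≤ (2:ℝ) ^ (((d x : ℕ)) : ℝ) := by
              apply (Real.rpow_le_rpow_left_iff (by norm_num)).2
              exact Nat.le_ceil _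
      have h1' : S / H x ≤ (2:ℝ)^(d x) := by rw [hpow_eq]; exact h1
      have hinv := inv_anti₀ hrpos h1'
      rw [inv_div] at hinv
      show ((2:ℝ)^(d x))⁻¹ ≤ H x / S
      exact hinv
    · -- H x ≤ qw (d x) * (2 * S)
      have h2' : (2:ℝ) ^ (((d x : ℕ)) : ℝ) ≤ 2 * (S / H x) := by
        calc (2:ℝ) ^ (((d x : ℕ)) : ℝ) ≤ (2:ℝ) ^ (Real.logb 2 (S / H x) + 1) := by
              apply (Real.rpow_le_rpow_left_iff (by norm_num)).2
              exact (Nat.ceil_lt_add_one hlnn).le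
          _ = (S / H x) * 2 := by
              rw [Real.rpow_add (by norm_num), Real.rpow_logb (by norm_num) (by norm_num) hrpos,
                Real.rpow_one]
          _ = 2 * (S / H x) := mul_comm _ _
      have h2'' : (2:ℝ)^(d x) ≤ 2 * (S / H x) := by rw [hpow_eq]; exact h2'
      have hmul : H x * (2:ℝ)^(d x) ≤ 2 * S := by
        have := mul_le_mul_of_nonneg_left h2'' hHx.le
        calc H x * (2:ℝ)^(d x) ≤ H x * (2 * (S / H x)) := this
          _ = 2 * S := by field_simp
      show H x ≤ ((2:ℝ)^(d x))⁻¹ * (2 * S)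
      rw [inv_mul_eq_div]
      exact (le_div_iff₀ (by positivity)).2 hmul
  -- apply the key lemma
  set lp : List (A × ℕ) := l'.map (fun x => (x, d x)) with hlp
  have hfst : (lp.map Prod.fst).sum = l'.sum := by
    rw [hlp, List.map_map]
    rw [show (Prod.fst ∘ fun x : A => (x, d x)) = id from rfl, List.map_id]
  have hb1 : ∀ p ∈ lp, H p.1 ≤ qw p.2 * (2 * S) := by
    intro p hp
    obtain ⟨x, hx, rfl⟩ := List.mem_map.1 hp
    exact (hdprop x hx).2
  have hb2 : (lp.map fun p => qw p.2).sum ≤ 1 := by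
    rw [hlp, List.map_map]
    have hle : ((l'.map fun x => qw (d x)).sum : ℝ) ≤ (l'.map fun x => H x / S).sum :=
      List.sum_le_sum (fun x hx => (hdprop x hx).1)
    have heq : (l'.map fun x => H x / S).sum = 1 := by
      simp only [div_eq_mul_inv]
      rw [List.sum_map_mul_right]
      rw [← hS]
      exact mul_inv_cancel₀ hSpos.ne'
    calc ((l'.map fun x => (qw (d x))).sum : ℝ) ≤ _ := hle
      _ = 1 := heq
  have := key_lemma H h0 h2 (2 * S) (by positivity) lp.length lp (le_refl _) hb1 hb2
  rw [hfst] at this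
  linarith [this]

end QuasinormAux

open QuasinormAux in
/-- a `κ`-quasinorm admits an equivalent `1`-norm with
`|a|' ≤ |a|^ρ ≤ 2|a|'` whenever `(2κ)^ρ = 2`, `ρ > 0`. -/
theorem quasinorm_equiv_one_norm {A : Type*} [AddCommGroup A]
    (N : A → ℝ) (κ ρ : ℝ) (hκ : 1 ≤ κ)
    (hnn : ∀ a, 0 ≤ N a) (h0 : N 0 = 0) (hpos : ∀ a : A, a ≠ 0 → 0 < N a)
    (hneg : ∀ a : A, N (-a) = N a)
    (htri : ∀ a b : A, N (a + b) ≤ κ * (N a + N b))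
    (hρ : 0 < ρ) (hρκ : (2 * κ) ^ ρ = 2) :
    ∃ N' : A → ℝ,
      (∀ a, 0 ≤ N' a) ∧ N' 0 = 0 ∧ (∀ a : A, a ≠ 0 → 0 < N' a) ∧
      (∀ a : A, N' (-a) = N' a) ∧
      (∀ a b : A, N' (a + b) ≤ N' a + N' b) ∧
      (∀ a : A, N' a ≤ (N a) ^ ρ ∧ (N a) ^ ρ ≤ 2 * N' a) := by
  classical
  set H : A → ℝ := fun a => N a ^ ρ with hH
  have hHnn : ∀ a, 0 ≤ H a := fun a => Real.rpow_nonneg (hnn a) ρ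
  have hH0 : H 0 = 0 := by
    show N 0 ^ ρ = 0
    rw [h0]
    exact Real.zero_rpow hρ.ne'
  have hHpos : ∀ a, a ≠ 0 → 0 < H a := fun a ha => Real.rpow_pos_of_pos (hpos a ha) ρ
  have hHneg : ∀ a, H (-a) = H a := fun a => by show N (-a) ^ ρ = N a ^ ρ; rw [hneg]
  have hH2 : ∀ a b : A, H (a + b) ≤ 2 * max (H a) (H b) := by
    intro a b
    have hmax_nn : 0 ≤ max (N a) (N b) := le_trans (hnn a) (le_max_left _ _)
    have h1 : N (a + b) ≤ (2 * κ) * max (N a) (N b) := by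
      have hs : N a + N b ≤ 2 * max (N a) (N b) := by
        rcases le_total (N a) (N b) with h | h
        · rw [max_eq_right h]; linarith
        · rw [max_eq_left h]; linarith
      calc N (a + b) ≤ κ * (N a + N b) := htri a b
        _ ≤ κ * (2 * max (N a) (N b)) := by nlinarith
        _ = (2 * κ) * max (N a) (N b) := by ring
    have h2' : H (a + b) ≤ ((2 * κ) * max (N a) (N b)) ^ ρ :=
      Real.rpow_le_rpow (hnn _) h1 hρ.le
    have h3 : ((2 * κ) * max (N a) (N b)) ^ ρ = 2 * (max (N a) (N b)) ^ ρ := by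
      rw [Real.mul_rpow (by linarith) hmax_nn, hρκ]
    have h4 : (max (N a) (N b)) ^ ρ = max (H a) (H b) := by
      rcases le_total (N a) (N b) with h | h
      · rw [max_eq_right h, max_eq_right (Real.rpow_le_rpow (hnn a) h hρ.le)]
      · rw [max_eq_left h, max_eq_left (Real.rpow_le_rpow (hnn b) h hρ.le)]
    rw [h3, h4] at h2'
    exact h2'
  -- decomposition sums
  set D : A → Set ℝ := fun a => {s | ∃ l : List A, l.sum = a ∧ (l.map H).sum = s} with hD
  have hmemD : ∀ a : A, H a ∈ D a := by
    intro a
    exact ⟨[a], by simp, by simp⟩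
  have hne : ∀ a : A, (D a).Nonempty := fun a => ⟨H a, hmemD a⟩
  have hlb : ∀ a : A, ∀ s ∈ D a, H a / 2 ≤ s := by
    rintro a s ⟨l, rfl, rfl⟩
    have := H_sum_le H hHnn hH0 hHpos hH2 l
    linarith
  have hlb0 : ∀ a : A, ∀ s ∈ D a, (0:ℝ) ≤ s := by
    rintro a s ⟨l, rfl, rfl⟩
    exact List.sum_nonneg (by
      intro x hx; obtain ⟨y, _, rfl⟩ := List.mem_map.1 hx; exact hHnn y)
  have hbdd : ∀ a : A, BddBelow (D a) := fun a => ⟨0, hlb0 a⟩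
  set N' : A → ℝ := fun a => sInf (D a) with hN'
  have hle : ∀ a, N' a ≤ H a := fun a => csInf_le (hbdd a) (hmemD a)
  have hge : ∀ a, H a / 2 ≤ N' a := fun a => le_csInf (hne a) (hlb a)
  have hnn' : ∀ a, 0 ≤ N' a := fun a => le_csInf (hne a) (hlb0 a)
  refine ⟨N', hnn', ?_, ?_, ?_, ?_, ?_⟩
  · exact _root_.le_antisymm (le_trans (hle 0) (le_of_eq hH0)) (hnn' 0)
  · intro a ha
    have := hHpos a ha
    calc (0:ℝ) < H a / 2 := by linarith
      _ ≤ N' a := hge a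
  · -- neg
    have hsub : ∀ a : A, D a ⊆ D (-a) := by
      rintro a s ⟨l, rfl, rfl⟩
      refine ⟨l.map fun x => -x, ?_, ?_⟩
      · exact sum_map_neg l
      · rw [List.map_map]
        congr 1
        apply List.map_congr_left
        intro x _
        exact hHneg x
    intro a
    apply _root_.le_antisymm
    · exact csInf_le_csInf (hbdd (-a)) (hne a) (hsub a)
    · have h1 : D (-a) ⊆ D a := by
        have := hsub (-a)
        rwa [neg_neg] at this
      exact csInf_le_csInf (hbdd a) (hne (-a)) h1
  · -- triangle inequality
    intro a b
    have hstep : ∀ s ∈ D a, ∀ t ∈ D b, N' (a + b) ≤ s + t := by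
      rintro s ⟨l₁, rfl, rfl⟩ t ⟨l₂, rfl, rfl⟩
      apply csInf_le (hbdd _)
      exact ⟨l₁ ++ l₂, by simp, by simp⟩
    have h1 : ∀ s ∈ D a, N' (a + b) - N' b ≤ s := by
      intro s hs
      have h2' : N' (a + b) - s ≤ N' b :=
        le_csInf (hne b) (fun t ht => by linarith [hstep s hs t ht])
      linarith
    have h2 : N' (a + b) - N' b ≤ N' a := le_csInf (hne a) h1
    linarith
  · intro a
    refine ⟨hle a, ?_⟩
    have := hge a
    show H a ≤ 2 * N' a
    linarith
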